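/- Let V be a vector space of dimension n over a field, and let g_1, ..., g_{n+1} be pseudoreflections whose product is a scalar μ ≠ 1 that is not an eigenvalue of any g_i. Then for each 1 ≤ m ≤ n, the element h = g_1 g_2 ⋯ g_m satisfies dim ker(h - 1) = n - m and dim ker(h - μ) = m - 1. -/

import Mathlib

open Module LinearMap

section Aux

variable {K V : Type*} [Field K] [AddCommGroup V] [Module K V] [FiniteDimensional K V]

/-- Subadditivity of rank: a product of endomorphisms each of rank-1 deviation from
the identity deviates from the identity by rank at most the number of factors. -/
lemma jp_aux_rank (l : List (Module.End K V))
    (h1 : ∀ f ∈ l, Module.finrank K (LinearMap.range (f - 1)) ≤ 1) :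
    Module.finrank K (LinearMap.range (l.prod - 1)) ≤ l.length := by
  induction l with
  | nil =>
      rw [List.prod_nil, sub_self, LinearMap.range_zero]; simp
  | cons f t IH =>
      have hdecomp : (f :: t).prod - 1 = f * (t.prod - 1) + (f - 1) := by
        rw [List.prod_cons, mul_sub, mul_one]; abel
      have hsub : LinearMap.range ((f :: t).prod - 1) ≤
          LinearMap.range (f * (t.prod - 1)) ⊔ LinearMap.range (f - 1) := by
        rw [hdecomp]
        rintro x ⟨v, rfl⟩
        exact Submodule.mem_sup.2 ⟨(f * (t.prod - 1)) v, ⟨v, rfl⟩, (f - 1) v, ⟨v, rfl⟩, rfl⟩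
      have h2 : Module.finrank K (LinearMap.range (f * (t.prod - 1))) ≤
          Module.finrank K (LinearMap.range (t.prod - 1)) := by
        have : LinearMap.range (f * (t.prod - 1)) =
            (LinearMap.range (t.prod - 1)).map f := by
          rw [Module.End.mul_eq_comp, LinearMap.range_comp]
        rw [this]
        exact Submodule.finrank_map_le f _
      have h3 := Submodule.finrank_sup_add_finrank_inf_eq
        (LinearMap.range (f * (t.prod - 1))) (LinearMap.range (f - 1))
      have h4 := Submodule.finrank_mono hsub
      have h5 := IH (fun x hx => h1 x (List.mem_cons_of_mem _ hx))
      have h6 := h1 f (List.mem_cons_self)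
      simp only [List.length_cons]
      omega

/-- Key lemma: if `μ` is not an eigenvalue of any member of a nonempty list of
endomorphisms whose deviations from the identity have rank at most one, then
the `μ`-eigenspace of the product has dimension strictly less than the length. -/
lemma jp_aux_key (μ : K) (l : List (Module.End K V)) (hne : l ≠ [])
    (h1 : ∀ f ∈ l, Module.finrank K (LinearMap.range (f - 1)) ≤ 1)
    (h2 : ∀ f ∈ l, LinearMap.ker (f - μ • 1) = ⊥) :
    Module.finrank K (LinearMap.ker (l.prod - μ • (1 : Module.End K V))) + 1 ≤ l.length := by
  induction l with
  | nil => exact absurd rfl hne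
  | cons f t IH =>
      rcases eq_or_ne t [] with rfl | hte
      · rw [show ([f] : List (Module.End K V)).prod = f by simp, h2 f (List.mem_cons_self)]
        simp
      · have hIH := IH hte (fun x hx => h1 x (List.mem_cons_of_mem _ hx))
          (fun x hx => h2 x (List.mem_cons_of_mem _ hx))
        set q : Module.End K V := t.prod with hq
        set W : Submodule K V := LinearMap.ker ((f :: t).prod - μ • 1) with hW
        let ψ : W →ₗ[K] V := (q - μ • (1 : Module.End K V)) ∘ₗ W.subtype
        have hmemW : ∀ v ∈ W, (f * q) v = μ • v := by
          intro v hv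
          have : ((f :: t).prod - μ • 1) v = 0 := hv
          rw [List.prod_cons] at this
          simpa [sub_eq_zero] using this
        have hrange : LinearMap.range ψ ≤ LinearMap.range (f - 1) := by
          rintro x ⟨⟨v, hv⟩, rfl⟩
          refine ⟨-(q v), ?_⟩
          have h5 : f (q v) = μ • v := hmemW v hv
          show (f - 1) (-(q v)) = ψ ⟨v, hv⟩
          simp only [ψ, LinearMap.coe_comp, Function.comp_apply, Submodule.coe_subtype,
            LinearMap.sub_apply, LinearMap.smul_apply, Module.End.one_apply, map_neg,
            LinearMap.map_neg]
          rw [h5]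
          abel
        have hr1 : Module.finrank K (LinearMap.range ψ) ≤ 1 :=
          le_trans (Submodule.finrank_mono hrange) (h1 f (List.mem_cons_self))
        have hk1 : Module.finrank K (LinearMap.ker ψ) ≤
            Module.finrank K (LinearMap.ker (q - μ • (1 : Module.End K V))) := by
          rw [← Submodule.finrank_map_subtype_eq W (LinearMap.ker ψ)]
          apply Submodule.finrank_mono
          rintro x ⟨⟨v, hv⟩, hv2, rfl⟩
          exact hv2
        have hrn := LinearMap.finrank_range_add_finrank_ker ψ
        have hWrank : Module.finrank K W ≤
            Module.finrank K (LinearMap.ker (q - μ • (1 : Module.End K V))) + 1 := by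
          omega
        simp only [List.length_cons]
        omega

end Aux

/-- Let `V` have dimension `n` and let `g 0, ..., g n` be pseudoreflections whose ordered
product is a scalar `μ ≠ 1` which is not an eigenvalue of any `g i`.  Then for
`1 ≤ m ≤ n`, the partial product `h = g 0 * ⋯ * g (m-1)` satisfies
`dim ker (h - 1) = n - m` and `dim ker (h - μ) = m - 1`. -/
theorem jp_partial_product_eigenspaces {K V : Type*} [Field K] [AddCommGroup V]
    [Module K V] [FiniteDimensional K V] (n : ℕ) (hdim : Module.finrank K V = n)
    (g : Fin (n + 1) → Module.End K V) (hunit : ∀ i, IsUnit (g i))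
    (hrank : ∀ i, LinearMap.rank (g i - 1) = (1 : Cardinal))
    (μ : K) (hprod : (List.ofFn g).prod = μ • (1 : Module.End K V))
    (hμ : μ ≠ 1) (heig : ∀ i, ¬ Module.End.HasEigenvalue (g i) μ)
    (m : ℕ) (hm1 : 1 ≤ m) (hmn : m ≤ n) :
    let h : Module.End K V :=
      (List.ofFn fun i : Fin m => g (Fin.castLE (Nat.le_succ_of_le hmn) i)).prod
    Module.finrank K (LinearMap.ker (h - 1)) = n - m ∧
      Module.finrank K (LinearMap.ker (h - μ • 1)) = m - 1 := by
  intro h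
  -- basic conversions of the hypotheses
  have h1g : ∀ i, Module.finrank K (LinearMap.range (g i - 1)) ≤ 1 := by
    intro i
    have : Module.rank K (LinearMap.range (g i - 1)) = ((1 : ℕ) : Cardinal) := by
      simpa using hrank i
    exact le_of_eq (Module.finrank_eq_of_rank_eq this)
  have h2g : ∀ i, LinearMap.ker (g i - μ • 1) = ⊥ := by
    intro i
    have := heig i
    rw [Module.End.hasEigenvalue_iff] at this
    rw [← Module.End.eigenspace_def]
    exact not_ne_iff.mp this
  -- split the full list into the first `m` terms and the rest
  set A : List (Module.End K V) :=
    List.ofFn fun i : Fin m => g (Fin.castLE (Nat.le_succ_of_le hmn) i) with hA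
  set B : List (Module.End K V) := (List.ofFn g).drop m with hB
  have hmn' : m ≤ n + 1 := Nat.le_succ_of_le hmn
  have hAtake : A = (List.ofFn g).take m := by
    rw [hA, ← Fin.ofFn_take_eq_take_ofFn hmn' g]
    rfl
  have hABeq : A ++ B = List.ofFn g := by
    rw [hAtake, hB, List.take_append_drop]
  have hAlen : A.length = m := by simp [hA]
  have hBlen : B.length = n + 1 - m := by simp [hB]
  have hAne : A ≠ [] := by
    intro hcon
    rw [hcon] at hAlen
    simp at hAlen
    omega
  have hBne : B ≠ [] := by
    intro hcon
    rw [hcon] at hBlen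
    simp at hBlen
    omega
  have hmemA : ∀ f ∈ A, ∃ i, g i = f := by
    intro f hf
    have : f ∈ List.ofFn g := hABeq ▸ List.mem_append_left B hf
    exact List.mem_ofFn.mp this
  have hmemB : ∀ f ∈ B, ∃ i, g i = f := by
    intro f hf
    have : f ∈ List.ofFn g := hABeq ▸ List.mem_append_right A hf
    exact List.mem_ofFn.mp this
  have h1A : ∀ f ∈ A, Module.finrank K (LinearMap.range (f - 1)) ≤ 1 := by
    intro f hf; obtain ⟨i, rfl⟩ := hmemA f hf; exact h1g i
  have h2A : ∀ f ∈ A, LinearMap.ker (f - μ • 1) = ⊥ := by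
    intro f hf; obtain ⟨i, rfl⟩ := hmemA f hf; exact h2g i
  have h1B : ∀ f ∈ B, Module.finrank K (LinearMap.range (f - 1)) ≤ 1 := by
    intro f hf; obtain ⟨i, rfl⟩ := hmemB f hf; exact h1g i
  have h2B : ∀ f ∈ B, LinearMap.ker (f - μ • 1) = ⊥ := by
    intro f hf; obtain ⟨i, rfl⟩ := hmemB f hf; exact h2g i
  have hh : h = A.prod := rfl
  have hprodAB : A.prod * B.prod = μ • (1 : Module.End K V) := by
    rw [← List.prod_append, hABeq, hprod]
  -- `h` is a unit
  have hu : IsUnit h := by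
    rw [hh]
    exact List.prod_isUnit (fun f hf => by
      obtain ⟨i, rfl⟩ := hmemA f hf; exact hunit i)
  obtain ⟨u, huu⟩ := hu
  -- rank-nullity for the two maps
  have hrn1 := LinearMap.finrank_range_add_finrank_ker (h - 1)
  have hrn2 := LinearMap.finrank_range_add_finrank_ker (h - μ • (1 : Module.End K V))
  rw [hdim] at hrn1 hrn2
  -- (1) rank (h - 1) ≤ m
  have fact1 : Module.finrank K (LinearMap.range (h - 1)) ≤ m := by
    rw [hh, ← hAlen]
    exact jp_aux_rank A h1A
  -- (2) dim ker (h - μ) + 1 ≤ m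
  have fact2 : Module.finrank K (LinearMap.ker (h - μ • (1 : Module.End K V))) + 1 ≤ m := by
    rw [hh, ← hAlen]
    exact jp_aux_key μ A hAne h1A h2A
  -- (3) dim ker (B.prod - μ) + 1 ≤ n + 1 - m
  have fact3 : Module.finrank K
      (LinearMap.ker (B.prod - μ • (1 : Module.End K V))) + 1 ≤ n + 1 - m := by
    rw [← hBlen]
    exact jp_aux_key μ B hBne h1B h2B
  -- (4) ker (h - 1) ≤ ker (B.prod - μ)
  have fact4 : LinearMap.ker (h - 1) ≤ LinearMap.ker (B.prod - μ • (1 : Module.End K V)) := by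
    intro v hv
    have hfix : h v = v := by
      have : (h - 1) v = 0 := hv
      simpa [sub_eq_zero] using this
    have hinv : (↑u⁻¹ : Module.End K V) v = v := by
      conv_lhs => rw [← hfix, ← huu]
      rw [← Module.End.mul_apply, u.inv_mul, Module.End.one_apply]
    have hBv : B.prod v = μ • v := by
      have h5 : h (B.prod v) = μ • v := by
        have := congrArg (fun φ : Module.End K V => φ v) hprodAB
        simpa [hh, Module.End.mul_apply] using this
      have h6 := congrArg (fun w => (↑u⁻¹ : Module.End K V) w) h5
      rw [← huu, ← Module.End.mul_apply, u.inv_mul, Module.End.one_apply, map_smul, hinv] at h6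
      exact h6
    show (B.prod - μ • (1 : Module.End K V)) v = 0
    simp [sub_eq_zero, hBv]
  have fact4' : Module.finrank K (LinearMap.ker (h - 1)) ≤
      Module.finrank K (LinearMap.ker (B.prod - μ • (1 : Module.End K V))) :=
    Submodule.finrank_mono fact4
  -- (5) rank (h - μ) ≤ n + 1 - m
  have fact5 : Module.finrank K (LinearMap.range (h - μ • (1 : Module.End K V))) ≤ n + 1 - m := by
    have hdecomp : h - μ • (1 : Module.End K V) = h * (1 - B.prod) := by
      rw [mul_sub, mul_one, hh, hprodAB]
    have hR : LinearMap.range (h - μ • (1 : Module.End K V)) =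
        (LinearMap.range ((1 : Module.End K V) - B.prod)).map h := by
      rw [hdecomp, Module.End.mul_eq_comp, LinearMap.range_comp]
    have hneg : LinearMap.range ((1 : Module.End K V) - B.prod) =
        LinearMap.range (B.prod - 1) := by
      rw [show (1 : Module.End K V) - B.prod = -(B.prod - 1) from (neg_sub _ _).symm,
        LinearMap.range_neg]
    calc Module.finrank K (LinearMap.range (h - μ • (1 : Module.End K V)))
        ≤ Module.finrank K (LinearMap.range ((1 : Module.End K V) - B.prod)) := by
          rw [hR]; exact Submodule.finrank_map_le h _
      _ = Module.finrank K (LinearMap.range (B.prod - 1)) := by rw [hneg]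
      _ ≤ B.length := jp_aux_rank B h1B
      _ = n + 1 - m := hBlen
  omega
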